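/- In the one-dimensional first example with monotone initial data: if m is nonnegative, bounded, and non-increasing on [x − r − 2cT, x + r + 2cT], then the pair h_ℓ ≡ 0, h_r(t) = 2c(T−t) solves the backward system h_r'(t) = −2c·H(m(x−r−h_ℓ(t)) − m(x+r+h_r(t))), h_ℓ'(t) = −2c·H(m(x+r+h_r(t)) − m(x−r−h_ℓ(t))), h_r(T) = h_ℓ(T) = 0, h_ℓ'h_r' = 0, h_ℓ' + h_r' = −2c (with the convention that when the Heaviside argument vanishes one takes (h_ℓ',h_r') = (−2c,0) or (0,−2c)), and the corresponding candidate value V(x,m,t) = ∫_{x−r}^{x+r+2c(T−t)} m(ξ)dξ satisfies the stationarity identity −V_t + c|m(x+r+h_r(t)) − m(x−r−h_ℓ(t))| − c(m(x+r+h_r(t)) + m(x−r−h_ℓ(t))) = 0 for all t ∈ [0,T]. -/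
import Mathlib


open Set MeasureTheory intervalIntegral

/-- the one-dimensional first example with monotone initial data.
If `m` is nonnegative, continuous and non-increasing on `[x−r−2cT, x+r+2cT]`, then
the pair `hℓ ≡ 0`, `h_r(t) = 2c(T−t)` solves the backward system
(`h_r' = −2c·H(m(x−r−hℓ) − m(x+r+h_r))`, `hℓ' = −2c·H(m(x+r+h_r) − m(x−r−hℓ))`,
`h_r(T) = hℓ(T) = 0`, `hℓ'·h_r' = 0`, `hℓ' + h_r' = −2c`, with the stated
convention when the Heaviside argument vanishes), and the candidate value
`V(x,m,t) = ∫_{x−r}^{x+r+2c(T−t)} m` satisfies the stationarity identity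
`−V_t + c|m(x+r+h_r(t)) − m(x−r−hℓ(t))| − c(m(x+r+h_r(t)) + m(x−r−hℓ(t))) = 0`. -/
theorem stmt_17 (c r T x : ℝ) (hc : 0 < c) (hr : 0 < r) (hT : 0 < T)
    (m : ℝ → ℝ) (hmc : Continuous m) (hm0 : ∀ ξ, 0 ≤ m ξ)
    (hmono : AntitoneOn m (Icc (x - r - 2*c*T) (x + r + 2*c*T))) :
    -- final conditions
    (2*c*(T - T) = 0 ∧ (0:ℝ) = 0) ∧
    -- the backward ODE system with the Heaviside convention
    (∀ t ∈ Icc (0:ℝ) T,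
      HasDerivAt (fun t : ℝ => 2*c*(T - t)) (-(2*c)) t ∧
      HasDerivAt (fun _ : ℝ => (0:ℝ)) 0 t ∧
      (0:ℝ) * (-(2*c)) = 0 ∧ (0:ℝ) + (-(2*c)) = -(2*c) ∧
      (m (x - r - 0) - m (x + r + 2*c*(T - t)) ≠ 0 →
        (-(2*c) = -(2*c) * (if 0 < m (x - r - 0) - m (x + r + 2*c*(T - t))
            then (1:ℝ) else 0) ∧
         (0:ℝ) = -(2*c) * (if 0 < m (x + r + 2*c*(T - t)) - m (x - r - 0)
            then (1:ℝ) else 0)))) ∧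
    -- stationarity identity for the candidate value function
    (∀ t ∈ Icc (0:ℝ) T, ∃ Vt : ℝ,
      HasDerivAt (fun t : ℝ => ∫ ξ in (x - r)..(x + r + 2*c*(T - t)), m ξ) Vt t ∧
      -Vt + c * |m (x + r + 2*c*(T - t)) - m (x - r - 0)| -
        c * (m (x + r + 2*c*(T - t)) + m (x - r - 0)) = 0) := by
  have key : ∀ t ∈ Icc (0:ℝ) T, m (x + r + 2*c*(T - t)) ≤ m (x - r - 0) := by
    intro t ht
    have h1 : x - r - 0 ∈ Icc (x - r - 2*c*T) (x + r + 2*c*T) := by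
      constructor <;> nlinarith
    have h2 : x + r + 2*c*(T - t) ∈ Icc (x - r - 2*c*T) (x + r + 2*c*T) := by
      constructor <;> nlinarith [ht.1, ht.2]
    exact hmono h1 h2 (by nlinarith [ht.2])
  refine ⟨⟨by ring, rfl⟩, ?_, ?_⟩
  · intro t ht
    refine ⟨?_, hasDerivAt_const _ _, by ring, by ring, ?_⟩
    · have : HasDerivAt (fun t : ℝ => 2*c*(T - t)) (2*c * (-1)) t :=
        ((hasDerivAt_id t).const_sub T).const_mul (2*c)
      simpa using this
    · intro hne
      have hle := key t ht
      have hpos : 0 < m (x - r - 0) - m (x + r + 2*c*(T - t)) := by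
        rcases lt_or_eq_of_le hle with h | h
        · linarith
        · exact absurd (by linarith) hne
      constructor
      · rw [if_pos hpos]; ring
      · rw [if_neg (by linarith)]; ring
  · intro t ht
    set u : ℝ := x + r + 2*c*(T - t) with hu
    refine ⟨m u * (-(2*c)), ?_, ?_⟩
    · have hF : HasDerivAt (fun y : ℝ => ∫ ξ in (x - r)..y, m ξ) (m u) u :=
        (hmc.integral_hasStrictDerivAt (x - r) u).hasDerivAt
      have hg : HasDerivAt (fun t : ℝ => x + r + 2*c*(T - t)) (-(2*c)) t := by
        have : HasDerivAt (fun t : ℝ => x + r + 2*c*(T - t)) (2*c * (-1)) t :=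
          (((hasDerivAt_id t).const_sub T).const_mul (2*c)).const_add (x + r)
        simpa using this
      exact hF.comp t hg
    · have hle := key t ht
      rw [abs_of_nonpos (by linarith)]
      ring
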